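/- The zero forcing number of the complete bipartite graph K_{a,b} with 2 ≤ a ≤ b equals a + b − 2. -/

import Mathlib

namespace SimpleGraph

variable {V : Type*}

/-- `G.ZeroForces Z v` : vertex `v` is eventually colored when starting from `Z`
and iteratively adding any vertex that is the unique uncolored neighbor of a colored vertex. -/
inductive ZeroForces (G : SimpleGraph V) (Z : Set V) : V → Prop
  | base {v : V} : v ∈ Z → ZeroForces G Z v
  | force {v u : V} : ZeroForces G Z v → G.Adj v u →
      (∀ w, G.Adj v w → w ≠ u → ZeroForces G Z w) → ZeroForces G Z u

/-- The forcing closure `F(Z)`. -/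
def zfClosure (G : SimpleGraph V) (Z : Set V) : Set V := {v | G.ZeroForces Z v}

/-- `Z` is a zero forcing set of `G`. -/
def IsZeroForcingSet (G : SimpleGraph V) (Z : Set V) : Prop := ∀ v, G.ZeroForces Z v

/-- The zero forcing number `Z(G)`. -/
noncomputable def zeroForcingNumber (G : SimpleGraph V) [Fintype V] : ℕ :=
  sInf {k | ∃ Z : Finset V, Z.card = k ∧ G.IsZeroForcingSet ↑Z}

end SimpleGraph

open SimpleGraph Sum

lemma aux_left {α β : Type*} (Z : Set (α ⊕ β)) (x1 x2 : α) (h12 : x1 ≠ x2)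
    (h1 : inl x1 ∉ Z) (h2 : inl x2 ∉ Z) {v : α ⊕ β}
    (hv : (completeBipartiteGraph α β).ZeroForces Z v) : v ≠ inl x1 ∧ v ≠ inl x2 := by
  induction hv with
  | base h => constructor <;> rintro rfl <;> [exact h1 h; exact h2 h]
  | @force v u hv hadj hall ihv ihall =>
    constructor
    · rintro rfl
      -- v must be inr
      obtain ⟨y, rfl⟩ : ∃ y, v = inr y := by
        cases v with
        | inl x => simp at hadj
        | inr y => exact ⟨y, rfl⟩
      have := ihall (inl x2) (by simp) (by simp [h12.symm])
      exact this.2 rfl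
    · rintro rfl
      obtain ⟨y, rfl⟩ : ∃ y, v = inr y := by
        cases v with
        | inl x => simp at hadj
        | inr y => exact ⟨y, rfl⟩
      have := ihall (inl x1) (by simp) (by simp [h12])
      exact this.1 rfl

lemma aux_right {α β : Type*} (Z : Set (α ⊕ β)) (y1 y2 : β) (h12 : y1 ≠ y2)
    (h1 : inr y1 ∉ Z) (h2 : inr y2 ∉ Z) {v : α ⊕ β}
    (hv : (completeBipartiteGraph α β).ZeroForces Z v) : v ≠ inr y1 ∧ v ≠ inr y2 := by
  induction hv with
  | base h => constructor <;> rintro rfl <;> [exact h1 h; exact h2 h]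
  | @force v u hv hadj hall ihv ihall =>
    constructor
    · rintro rfl
      obtain ⟨x, rfl⟩ : ∃ x, v = inl x := by
        cases v with
        | inl x => exact ⟨x, rfl⟩
        | inr y => simp at hadj
      have := ihall (inr y2) (by simp) (by simp [h12.symm])
      exact this.2 rfl
    · rintro rfl
      obtain ⟨x, rfl⟩ : ∃ x, v = inl x := by
        cases v with
        | inl x => exact ⟨x, rfl⟩
        | inr y => simp at hadj
      have := ihall (inr y1) (by simp) (by simp [h12])
      exact this.1 rfl

theorem stmt14 (a b : ℕ) (ha : 2 ≤ a) (hab : a ≤ b) :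
    (completeBipartiteGraph (Fin a) (Fin b)).zeroForcingNumber = a + b - 2 := by
  have hb : 2 ≤ b := ha.trans hab
  set G := completeBipartiteGraph (Fin a) (Fin b)
  have ha0 : 0 < a := by omega
  have hb0 : 0 < b := by omega
  set x0 : Fin a := ⟨0, ha0⟩
  set x1 : Fin a := ⟨1, by omega⟩
  set y0 : Fin b := ⟨0, hb0⟩
  set y1 : Fin b := ⟨1, by omega⟩
  -- the candidate zero forcing set: everything except inl x0 and inr y0
  set Z : Finset (Fin a ⊕ Fin b) := {inl x0, inr y0}ᶜ with hZdef
  have hmemZ : ∀ v : Fin a ⊕ Fin b, v ∈ Z ↔ v ≠ inl x0 ∧ v ≠ inr y0 := by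
    intro v; simp [hZdef, not_or]
  have hcard : Z.card = a + b - 2 := by
    have : ({inl x0, inr y0} : Finset (Fin a ⊕ Fin b)).card = 2 := by
      rw [Finset.card_insert_of_notMem (by simp), Finset.card_singleton]
    rw [Finset.card_compl, this]
    simp [Fintype.card_sum]
  have hforce : G.IsZeroForcingSet ↑Z := by
    intro v
    have hbase : ∀ w : Fin a ⊕ Fin b, w ≠ inl x0 → w ≠ inr y0 → G.ZeroForces ↑Z w := by
      intro w h1 h2
      exact ZeroForces.base (by simp [hmemZ, h1, h2])
    have hy0 : G.ZeroForces ↑Z (inr y0) := by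
      refine ZeroForces.force (v := inl x1) (hbase _ (by simp [x0, x1, Fin.ext_iff]) (by simp)) (by simp [G]) ?_
      intro w hadj hne
      cases w with
      | inl x => exact absurd hadj (by simp [G])
      | inr y => exact hbase _ (by simp) hne
    have hx0 : G.ZeroForces ↑Z (inl x0) := by
      refine ZeroForces.force (v := inr y1) (hbase _ (by simp) (by simp [y0, y1, Fin.ext_iff])) (by simp [G]) ?_
      intro w hadj hne
      cases w with
      | inl x => exact hbase _ hne (by simp)
      | inr y => exact absurd hadj (by simp [G])
    rcases v with x | y
    · by_cases h : x = x0
      · exact h ▸ hx0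
      · exact hbase _ (by simp [h]) (by simp)
    · by_cases h : y = y0
      · exact h ▸ hy0
      · exact hbase _ (by simp) (by simp [h])
  have hmem : a + b - 2 ∈ {k | ∃ Z : Finset (Fin a ⊕ Fin b), Z.card = k ∧ G.IsZeroForcingSet ↑Z} :=
    ⟨Z, hcard, hforce⟩
  refine le_antisymm (Nat.sInf_le hmem) (le_csInf ⟨_, hmem⟩ ?_)
  rintro k ⟨W, rfl, hW⟩
  -- lower bound: complement of W has at most one left and one right vertex
  have hL : (Wᶜ.filter (fun v => v.isLeft)).card ≤ 1 := by
    refine Finset.card_le_one.2 ?_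
    intro u hu v hv
    simp only [Finset.mem_filter, Finset.mem_compl] at hu hv
    obtain ⟨x, rfl⟩ := Sum.isLeft_iff.1 hu.2
    obtain ⟨y, rfl⟩ := Sum.isLeft_iff.1 hv.2
    by_contra hne
    have hxy : x ≠ y := fun h => hne (by rw [h])
    exact (aux_left (↑W : Set (Fin a ⊕ Fin b)) x y hxy (by simpa using hu.1) (by simpa using hv.1) (hW (inl x))).1 rfl
  have hR : (Wᶜ.filter (fun v => v.isRight)).card ≤ 1 := by
    refine Finset.card_le_one.2 ?_
    intro u hu v hv
    simp only [Finset.mem_filter, Finset.mem_compl] at hu hv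
    obtain ⟨x, rfl⟩ := Sum.isRight_iff.1 hu.2
    obtain ⟨y, rfl⟩ := Sum.isRight_iff.1 hv.2
    by_contra hne
    have hxy : x ≠ y := fun h => hne (by rw [h])
    exact (aux_right (↑W : Set (Fin a ⊕ Fin b)) x y hxy (by simpa using hu.1) (by simpa using hv.1) (hW (inr x))).1 rfl
  have hWc : Wᶜ.card ≤ 2 := by
    have hsplit : Wᶜ = Wᶜ.filter (fun v => v.isLeft) ∪ Wᶜ.filter (fun v => v.isRight) := by
      ext v
      cases v <;> simp
    calc Wᶜ.card ≤ (Wᶜ.filter (fun v => v.isLeft)).card + (Wᶜ.filter (fun v => v.isRight)).card := by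
          conv_lhs => rw [hsplit]
          exact Finset.card_union_le _ _
      _ ≤ 2 := by omega
  have hcardW : W.card + Wᶜ.card = a + b := by
    rw [Finset.card_add_card_compl]
    simp [Fintype.card_sum]
  omega
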